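/- Let k ≥ 2, n ≥ 2, λ ≥ 1 be integers and suppose A is an orthogonal array OA_λ(k,n) containing a row ρ repeated m times, where m = λn²/(k(n−1)+1). Then every row of A other than the m copies of ρ agrees with ρ in exactly k(λn − m)/(λn² − m) coordinates. -/
import Mathlib


/-- Equality case: if an OA_λ(k,n) contains a row ρ repeated m times with
m = λn²/(k(n−1)+1), then every row other than the m copies of ρ agrees with ρ
in exactly k(λn − m)/(λn² − m) coordinates. -/
theorem repeated_row_equality_case (k n lam m : ℕ) (hk : 2 ≤ k) (hn : 2 ≤ n) (hlam : 1 ≤ lam)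
    (A : Fin (lam * n ^ 2) → Fin k → Fin n)
    (hOA : ∀ j j' : Fin k, j ≠ j' → ∀ x y : Fin n,
      (Finset.univ.filter (fun r => A r j = x ∧ A r j' = y)).card = lam)
    (ρ : Fin k → Fin n)
    (S : Finset (Fin (lam * n ^ 2))) (hScard : S.card = m)
    (hSrep : ∀ r ∈ S, A r = ρ)
    (hm : (m : ℚ) = ((lam : ℚ) * n ^ 2) / ((k : ℚ) * ((n : ℚ) - 1) + 1)) :
    ∀ i : Fin (lam * n ^ 2), i ∉ S →
      ((Finset.univ.filter (fun j => A i j = ρ j)).card : ℚ) =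
        (k : ℚ) * ((lam : ℚ) * n - m) / ((lam : ℚ) * n ^ 2 - m) := by
  classical
  haveI : Nontrivial (Fin k) := Fin.nontrivial_iff_two_le.mpr hk
  set T : Finset (Fin (lam * n ^ 2)) := Finset.univ \ S with hT
  -- column count: each column matches ρ in exactly λn rows
  have hcol : ∀ j : Fin k, (Finset.univ.filter (fun r => A r j = ρ j)).card = lam * n := by
    intro j
    obtain ⟨j', hj'⟩ := exists_ne j
    rw [Finset.card_eq_sum_card_fiberwise (f := fun r => A r j') (t := Finset.univ)
      (fun x _ => Finset.mem_univ _)]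
    have h1 : ∀ y : Fin n,
        ((Finset.univ.filter fun r => A r j = ρ j).filter fun r => A r j' = y).card = lam := by
      intro y
      rw [Finset.filter_filter]
      exact hOA j j' (Ne.symm hj') (ρ j) y
    simp [h1, mul_comm]
  -- removing the m repeated rows from a filter containing S
  have hsplit : ∀ P : Fin (lam * n ^ 2) → Prop, (∀ r ∈ S, P r) → ∀ [DecidablePred P],
      (T.filter P).card + m = (Finset.univ.filter P).card := by
    intro P hP _
    have hUnion : Finset.univ.filter P = T.filter P ∪ S.filter P := by
      rw [← Finset.filter_union, hT, Finset.sdiff_union_of_subset (Finset.subset_univ S)]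
    have hSfilter : S.filter P = S := Finset.filter_true_of_mem hP
    have hdisj : Disjoint (T.filter P) (S.filter P) := by
      apply Finset.disjoint_filter_filter
      exact Finset.sdiff_disjoint
    rw [hUnion, Finset.card_union_of_disjoint hdisj, hSfilter, hScard]
  have hcolT : ∀ j : Fin k, (T.filter (fun r => A r j = ρ j)).card + m = lam * n := by
    intro j
    rw [hsplit _ (fun r hr => by rw [hSrep r hr]), hcol]
  have hpairT : ∀ j j' : Fin k, j ≠ j' →
      (T.filter (fun r => A r j = ρ j ∧ A r j' = ρ j')).card + m = lam := by
    intro j j' hjj'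
    rw [hsplit _ (fun r hr => by rw [hSrep r hr]; exact ⟨rfl, rfl⟩), hOA j j' hjj']
  -- the agreement count
  set a : Fin (lam * n ^ 2) → ℕ := fun i => (Finset.univ.filter fun j => A i j = ρ j).card
    with ha
  have hcardfun : ∀ i, a i = ∑ j : Fin k, if A i j = ρ j then 1 else 0 := by
    intro i; exact Finset.card_filter _ _
  -- first moment
  have S1 : (∑ i ∈ T, a i) + k * m = k * (lam * n) := by
    have hstep : ∑ i ∈ T, a i = ∑ j : Fin k, (T.filter (fun r => A r j = ρ j)).card := by
      simp only [hcardfun]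
      rw [Finset.sum_comm]
      congr 1; ext j
      rw [Finset.card_filter]
    rw [hstep]
    calc (∑ j : Fin k, (T.filter (fun r => A r j = ρ j)).card) + k * m
        = ∑ j : Fin k, ((T.filter (fun r => A r j = ρ j)).card + m) := by
          rw [Finset.sum_add_distrib, Finset.sum_const, Finset.card_univ,
            Fintype.card_fin, smul_eq_mul]
      _ = ∑ j : Fin k, lam * n := by simp only [hcolT]
      _ = k * (lam * n) := by simp [Finset.sum_const, Finset.card_univ, mul_comm]
  -- second moment
  have S2 : (∑ i ∈ T, (a i) ^ 2) + k * (k * m) = k * ((k - 1) * lam + lam * n) := by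
    have hsq : ∀ i, (a i) ^ 2 = ∑ j : Fin k, ∑ j' : Fin k,
        if A i j = ρ j ∧ A i j' = ρ j' then 1 else 0 := by
      intro i
      rw [hcardfun, sq, Finset.sum_mul_sum]
      congr 1; ext j; congr 1; ext j'
      by_cases h1 : A i j = ρ j <;> by_cases h2 : A i j' = ρ j' <;> simp [h1, h2]
    have step : ∑ i ∈ T, (a i) ^ 2 = ∑ j : Fin k, ∑ j' : Fin k,
        (T.filter (fun r => A r j = ρ j ∧ A r j' = ρ j')).card := by
      simp only [hsq]
      rw [Finset.sum_comm]
      congr 1; ext j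
      rw [Finset.sum_comm]
      congr 1; ext j'
      rw [Finset.card_filter]
    rw [step]
    have inner : ∀ j : Fin k,
        (∑ j' : Fin k, (T.filter (fun r => A r j = ρ j ∧ A r j' = ρ j')).card) + k * m
          = (k - 1) * lam + lam * n := by
      intro j
      have hrw : (∑ j' : Fin k, (T.filter (fun r => A r j = ρ j ∧ A r j' = ρ j')).card) + k * m
          = ∑ j' : Fin k, ((T.filter (fun r => A r j = ρ j ∧ A r j' = ρ j')).card + m) := by
        rw [Finset.sum_add_distrib, Finset.sum_const, Finset.card_univ, Fintype.card_fin,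
          smul_eq_mul]
      rw [hrw, ← Finset.sum_erase_add _ _ (Finset.mem_univ j)]
      have hdiag : (T.filter (fun r => A r j = ρ j ∧ A r j = ρ j)).card + m = lam * n := by
        rw [← hcolT j]; congr 2; ext r; simp [and_self]
      have hoff : ∀ j' ∈ Finset.univ.erase j,
          (T.filter (fun r => A r j = ρ j ∧ A r j' = ρ j')).card + m = lam := by
        intro j' hj'
        exact hpairT j j' (Ne.symm (Finset.ne_of_mem_erase hj'))
      rw [Finset.sum_congr rfl hoff, hdiag, Finset.sum_const, Finset.card_erase_of_mem
        (Finset.mem_univ j), Finset.card_univ, Fintype.card_fin, smul_eq_mul]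
    calc (∑ j : Fin k, ∑ j' : Fin k,
          (T.filter (fun r => A r j = ρ j ∧ A r j' = ρ j')).card) + k * (k * m)
        = ∑ j : Fin k, ((∑ j' : Fin k,
            (T.filter (fun r => A r j = ρ j ∧ A r j' = ρ j')).card) + k * m) := by
          rw [Finset.sum_add_distrib, Finset.sum_const, Finset.card_univ, Fintype.card_fin,
            smul_eq_mul]
      _ = ∑ j : Fin k, ((k - 1) * lam + lam * n) := by simp only [inner]
      _ = k * ((k - 1) * lam + lam * n) := by
          simp [Finset.sum_const, Finset.card_univ, mul_comm]
  -- now pass to ℚ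
  have hkQ : (2:ℚ) ≤ (k:ℚ) := by exact_mod_cast hk
  have hnQ : (2:ℚ) ≤ (n:ℚ) := by exact_mod_cast hn
  have hlQ : (1:ℚ) ≤ (lam:ℚ) := by exact_mod_cast hlam
  have hD : (0:ℚ) < (k : ℚ) * ((n : ℚ) - 1) + 1 := by nlinarith
  have hD1 : (1:ℚ) < (k : ℚ) * ((n : ℚ) - 1) + 1 := by nlinarith
  have hNpos : (0:ℚ) < (lam:ℚ) * n ^ 2 := by nlinarith
  have hden : (0:ℚ) < (lam : ℚ) * n ^ 2 - m := by
    rw [hm]; rw [sub_pos]; exact div_lt_self hNpos hD1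
  have hmN : m ≤ lam * n ^ 2 := by
    rw [← hScard]
    calc S.card ≤ (Finset.univ : Finset (Fin (lam * n ^ 2))).card :=
          Finset.card_le_card (Finset.subset_univ S)
      _ = lam * n ^ 2 := by rw [Finset.card_univ, Fintype.card_fin]
  have hTcard : (T.card : ℚ) = (lam : ℚ) * n ^ 2 - m := by
    rw [hT, Finset.card_sdiff_of_subset (Finset.subset_univ S), Finset.card_univ, Fintype.card_fin, hScard]
    push_cast [Nat.cast_sub hmN]
    ring
  have S1Q : (∑ i ∈ T, (a i : ℚ)) = (k:ℚ) * (lam * n) - k * m := by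
    have := congrArg (fun x : ℕ => (x : ℚ)) S1
    push_cast at this
    linarith
  have S2Q : (∑ i ∈ T, (a i : ℚ) ^ 2) =
      (k:ℚ) * (((k:ℚ) - 1) * lam + lam * n) - k * (k * m) := by
    have := congrArg (fun x : ℕ => (x : ℚ)) S2
    push_cast [Nat.cast_sub (by omega : 1 ≤ k)] at this
    linarith
  have key : ((k:ℚ) * (((k:ℚ) - 1) * lam + lam * n) - k * (k * m)) * ((lam:ℚ) * n ^ 2 - m)
      = ((k:ℚ) * (lam * n) - k * m) ^ 2 := by
    rw [hm]
    field_simp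
    ring
  set c : ℚ := (k : ℚ) * ((lam : ℚ) * n - m) / ((lam : ℚ) * n ^ 2 - m) with hc
  have hcmul : c * ((lam : ℚ) * n ^ 2 - m) = (k:ℚ) * (lam * n) - k * m := by
    rw [hc, div_mul_cancel₀ _ (ne_of_gt hden)]
    ring
  have Ezero : ∑ i ∈ T, ((a i : ℚ) - c) ^ 2 = 0 := by
    have expand : ∑ i ∈ T, ((a i : ℚ) - c) ^ 2 =
        (∑ i ∈ T, (a i : ℚ) ^ 2) - 2 * c * (∑ i ∈ T, (a i : ℚ)) + T.card * c ^ 2 := by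
      rw [Finset.mul_sum, ← Finset.sum_sub_distrib]
      rw [show ((T.card : ℚ) * c ^ 2) = ∑ _i ∈ T, c ^ 2 by
        rw [Finset.sum_const, nsmul_eq_mul]]
      rw [← Finset.sum_add_distrib]
      congr 1; ext i; ring
    rw [expand, S1Q, S2Q, hTcard]
    have hne : ((lam:ℚ) * n ^ 2 - m) ≠ 0 := ne_of_gt hden
    have key2 : (k:ℚ) * (((k:ℚ) - 1) * lam + lam * n) - k * (k * m)
        = c ^ 2 * ((lam:ℚ) * n ^ 2 - m) := by
      apply mul_right_cancel₀ hne
      rw [key, ← hcmul]; ring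
    rw [key2, ← hcmul]; ring
  intro i hi
  have hiT : i ∈ T := by
    rw [hT, Finset.mem_sdiff]
    exact ⟨Finset.mem_univ i, hi⟩
  have hterm : ((a i : ℚ) - c) ^ 2 = 0 :=
    (Finset.sum_eq_zero_iff_of_nonneg (fun j _ => sq_nonneg ((a j : ℚ) - c))).mp Ezero i hiT
  have hsub : (a i : ℚ) - c = 0 :=
    pow_eq_zero_iff (n := 2) (by norm_num) |>.mp hterm
  have : (a i : ℚ) = c := by linarith
  rw [hc] at this
  exact this
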